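/- Let p be an irreducible stochastic matrix on a countable set S, let B ⊆ S be nonempty, and let b ∈ S∖B. Suppose there exist τ ∈ (0,1) and constants C_{ij} > 0 (i,j ∈ S) such that p^{(n),B∪{b}}_{ij} ≤ C_{ij}·τ^n for all i,j ∈ S and all n ≥ 1. Then there exist τ̂ ∈ (0,1) and constants Ĉ_{ij} > 0 such that p^{(n),B}_{ij} ≤ Ĉ_{ij}·τ̂^n for all i,j ∈ S and all n ≥ 1. (The inductive step in the proof of Proposition 4.4: removing one state from the taboo set preserves exponential decay of taboo probabilities.) -/

import Mathlib

open scoped Classical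

/-- Taboo probabilities: `tabooP p B n i j` is the probability of going from `i` to `j`
in `n` steps while all intermediate states avoid the taboo set `B`. -/
noncomputable def tabooP {S : Type*} (p : S → S → ℝ) (B : Set S) : ℕ → S → S → ℝ
  | 0 => fun i j => if i = j then 1 else 0
  | 1 => fun i j => p i j
  | n + 2 => fun i j => ∑' r : ↥Bᶜ, p i (r : S) * tabooP p B (n + 1) (r : S) j

/-- `n`-step transition probabilities. -/
noncomputable def nstep {S : Type*} (p : S → S → ℝ) : ℕ → S → S → ℝ :=
  tabooP p (∅ : Set S)

section helpers

variable {S : Type*} {p : S → S → ℝ}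
  (hp0 : ∀ i j, 0 ≤ p i j) (hp1 : ∀ i, HasSum (fun j => p i j) 1)

/-- subtype tsum monotone in the set, for nonneg summable functions -/
lemma tsum_set_mono {f : S → ℝ} (hf : Summable f) (h0 : ∀ x, 0 ≤ f x)
    {s t : Set S} (hst : s ⊆ t) : ∑' x : s, f x ≤ ∑' x : t, f x := by
  rw [tsum_subtype, tsum_subtype]
  exact Summable.tsum_le_tsum (fun n => Set.indicator_le_indicator_of_subset hst h0 n)
    (hf.indicator s) (hf.indicator t)

include hp1 in
lemma summable_row (i : S) : Summable (p i) := (hp1 i).summable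

include hp0 hp1 in
lemma p_le_one (i j : S) : p i j ≤ 1 :=
  le_hasSum (hp1 i) j (fun k _ => hp0 i k)

include hp0 in
lemma tabooP_nonneg (B : Set S) : ∀ n (i j : S), 0 ≤ tabooP p B n i j
  | 0, i, j => by unfold tabooP; split <;> norm_num
  | 1, i, j => hp0 i j
  | (n+2), i, j => by
    rw [tabooP]
    exact tsum_nonneg fun r => mul_nonneg (hp0 _ _) (tabooP_nonneg B (n+1) _ _)

lemma tabooP_succ (B : Set S) {n : ℕ} (hn : 1 ≤ n) (i j : S) :
    tabooP p B (n+1) i j = ∑' r : ↥Bᶜ, p i (r : S) * tabooP p B n (r : S) j := by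
  obtain ⟨m, rfl⟩ : ∃ m, n = m + 1 := ⟨n - 1, (Nat.succ_pred_eq_of_pos hn).symm⟩
  rw [tabooP]

include hp0 hp1 in
/-- summability of `r ↦ p i r * g r` over a subtype, when `0 ≤ g ≤ M`. -/
lemma summable_mul_bdd (i : S) (T : Set S) (g : S → ℝ) (M : ℝ)
    (hg0 : ∀ r, 0 ≤ g r) (hgM : ∀ r, g r ≤ M) :
    Summable (fun r : ↥T => p i (r : S) * g (r : S)) := by
  have hM : Summable (fun r : ↥T => M * p i (r : S)) :=
    (((hp1 i).summable.subtype T).mul_left M)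
  refine Summable.of_nonneg_of_le (fun r => mul_nonneg (hp0 _ _) (hg0 _)) (fun r => ?_) hM
  rw [mul_comm (M : ℝ)]
  exact mul_le_mul_of_nonneg_left (hgM _) (hp0 _ _)

include hp0 hp1 in
lemma tabooP_le_one (B : Set S) : ∀ n (i j : S), tabooP p B n i j ≤ 1
  | 0, i, j => by unfold tabooP; split <;> norm_num
  | 1, i, j => p_le_one hp0 hp1 i j
  | (n+2), i, j => by
    rw [tabooP]
    calc (∑' r : ↥Bᶜ, p i (r : S) * tabooP p B (n+1) (r : S) j)
        ≤ ∑' r : ↥Bᶜ, p i (r : S) := by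
          refine Summable.tsum_le_tsum (fun r => ?_)
            (summable_mul_bdd hp0 hp1 i Bᶜ (fun r => tabooP p B (n+1) r j) 1
              (fun r => tabooP_nonneg hp0 B _ _ _) (fun r => tabooP_le_one B (n+1) r j))
            ((hp1 i).summable.subtype _)
          calc p i (r : S) * tabooP p B (n+1) (r : S) j ≤ p i (r : S) * 1 :=
                mul_le_mul_of_nonneg_left (tabooP_le_one B (n+1) _ _) (hp0 _ _)
            _ = p i (r : S) := mul_one _
      _ ≤ ∑' r : S, p i r := by
          have := tsum_set_mono (S := S) (f := p i) (hp1 i).summable (hp0 i)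
            (Set.subset_univ Bᶜ)
          rwa [tsum_univ] at this
      _ = 1 := (hp1 i).tsum_eq

end helpers

section decomp

variable {S : Type*} {p : S → S → ℝ}
  (hp0 : ∀ i j, 0 ≤ p i j) (hp1 : ∀ i, HasSum (fun j => p i j) 1)

lemma tsum_set_congr {f : S → ℝ} {s t : Set S} (h : s = t) :
    ∑' r : ↥s, f r = ∑' r : ↥t, f r := by subst h; rfl

set_option maxHeartbeats 1000000 in
include hp0 hp1 in
lemma decomp (B : Set S) (b : S) (hb : b ∉ B) :
    ∀ n, 1 ≤ n → ∀ i j : S, tabooP p B n i j ≤ tabooP p (B ∪ {b}) n i j +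
      ∑ k ∈ Finset.range (n-1), tabooP p (B ∪ {b}) (k+1) i b * tabooP p B (n-1-k) b j := by
  set A : Set S := B ∪ {b} with hA
  intro n hn
  induction n, hn using Nat.le_induction with
  | base =>
    intro i j
    simp [tabooP]
  | succ n hn IH =>
    intro i j
    have hTn : ∀ (r j : S) (m : ℕ), 0 ≤ tabooP p B m r j := fun r j m => tabooP_nonneg hp0 B m r j
    have hTA : ∀ (r j : S) (m : ℕ), 0 ≤ tabooP p A m r j := fun r j m => tabooP_nonneg hp0 A m r j
    have hT1 : ∀ (Bs : Set S) (r j : S) (m : ℕ), tabooP p Bs m r j ≤ 1 :=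
      fun Bs r j m => tabooP_le_one hp0 hp1 Bs m r j
    -- the bracket function
    set G : S → ℝ := fun r => tabooP p A n r j +
      ∑ k ∈ Finset.range (n-1), tabooP p A (k+1) r b * tabooP p B (n-1-k) b j with hG
    have hG0 : ∀ r, 0 ≤ G r := fun r => add_nonneg (hTA _ _ _)
      (Finset.sum_nonneg fun k _ => mul_nonneg (hTA _ _ _) (hTn _ _ _))
    have hGM : ∀ r, G r ≤ 1 + (n-1 : ℕ) := by
      intro r
      refine add_le_add (hT1 _ _ _ _) ?_
      calc (∑ k ∈ Finset.range (n-1), tabooP p A (k+1) r b * tabooP p B (n-1-k) b j)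
          ≤ ∑ k ∈ Finset.range (n-1), 1 := by
            refine Finset.sum_le_sum fun k _ => ?_
            calc tabooP p A (k+1) r b * tabooP p B (n-1-k) b j
                ≤ 1 * 1 := mul_le_mul (hT1 _ _ _ _) (hT1 _ _ _ _) (hTn _ _ _) zero_le_one
              _ = 1 := mul_one 1
        _ = (n-1 : ℕ) := by simp
    -- split Bᶜ = {b} ∪ Aᶜ
    have hsplit : (Bᶜ : Set S) = {b} ∪ Aᶜ := by
      ext x
      by_cases hx : x = b <;> simp [hA, hx, hb]
    have hdisj : Disjoint ({b} : Set S) Aᶜ := by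
      rw [Set.disjoint_left]
      rintro x rfl
      simp [hA]
    have hsumb : ∀ (T : Set S), Summable
        ((fun r => p i r * tabooP p B n r j) ∘ (Subtype.val : ↥T → S)) := fun T =>
      summable_mul_bdd hp0 hp1 i T (fun x => tabooP p B n x j) 1 (fun r => hTn _ _ _) (fun r => hT1 _ _ _ _)
    have hstep : tabooP p B (n+1) i j = p i b * tabooP p B n b j +
        ∑' r : ↥Aᶜ, p i (r : S) * tabooP p B n (r : S) j := by
      rw [tabooP_succ B hn i j,
        tsum_set_congr (f := fun r => p i r * tabooP p B n r j) hsplit,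
        Summable.tsum_union_disjoint (f := fun r => p i r * tabooP p B n r j) hdisj
          (hsumb _) (hsumb _),
        tsum_singleton b (fun r => p i r * tabooP p B n r j)]
    -- bound the tsum over Aᶜ using IH
    have hbound : (∑' r : ↥Aᶜ, p i (r : S) * tabooP p B n (r : S) j)
        ≤ ∑' r : ↥Aᶜ, p i (r : S) * G (r : S) := by
      refine Summable.tsum_le_tsum (fun r => mul_le_mul_of_nonneg_left (IH (r : S) j) (hp0 _ _))
        (summable_mul_bdd hp0 hp1 i Aᶜ (fun x => tabooP p B n x j) 1
          (fun r => hTn _ _ _) (fun r => hT1 _ _ _ _))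
        (summable_mul_bdd hp0 hp1 i Aᶜ G (1 + (n-1 : ℕ)) hG0 hGM)
    -- compute the RHS tsum
    have hsum1 : Summable (fun r : ↥Aᶜ => p i (r : S) * tabooP p A n (r : S) j) :=
      summable_mul_bdd hp0 hp1 i Aᶜ (fun x => tabooP p A n x j) 1
        (fun r => hTA _ _ _) (fun r => hT1 _ _ _ _)
    have hsum2 : ∀ k ∈ Finset.range (n-1), Summable
        (fun r : ↥Aᶜ => p i (r : S) * (tabooP p A (k+1) (r : S) b * tabooP p B (n-1-k) b j)) := by
      intro k _
      exact summable_mul_bdd hp0 hp1 i Aᶜ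
        (fun x => tabooP p A (k+1) x b * tabooP p B (n-1-k) b j) 1
        (fun r => mul_nonneg (hTA _ _ _) (hTn _ _ _))
        (fun r => by
          calc tabooP p A (k+1) r b * tabooP p B (n-1-k) b j
              ≤ 1 * 1 := mul_le_mul (hT1 _ _ _ _) (hT1 _ _ _ _) (hTn _ _ _) zero_le_one
            _ = 1 := mul_one 1)
    have hcomp : (∑' r : ↥Aᶜ, p i (r : S) * G (r : S))
        = tabooP p A (n+1) i j +
          ∑ k ∈ Finset.range (n-1), tabooP p A (k+2) i b * tabooP p B (n-1-k) b j := by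
      have h1 : (fun r : ↥Aᶜ => p i (r : S) * G (r : S))
          = fun r : ↥Aᶜ => p i (r : S) * tabooP p A n (r : S) j +
            ∑ k ∈ Finset.range (n-1),
              p i (r : S) * (tabooP p A (k+1) (r : S) b * tabooP p B (n-1-k) b j) := by
        funext r
        rw [hG, mul_add, Finset.mul_sum]
      rw [h1, Summable.tsum_add hsum1 (by
        refine Summable.of_nonneg_of_le (fun r => Finset.sum_nonneg fun k _ =>
          mul_nonneg (hp0 _ _) (mul_nonneg (hTA _ _ _) (hTn _ _ _))) (fun r => ?_)
          ((((hp1 i).summable.subtype Aᶜ)).mul_left ((n-1 : ℕ) : ℝ))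
        calc (∑ k ∈ Finset.range (n-1),
              p i (r : S) * (tabooP p A (k+1) (r : S) b * tabooP p B (n-1-k) b j))
            ≤ ∑ k ∈ Finset.range (n-1), p i (r : S) := by
              refine Finset.sum_le_sum fun k _ => ?_
              calc p i (r : S) * (tabooP p A (k+1) (r : S) b * tabooP p B (n-1-k) b j)
                  ≤ p i (r : S) * 1 := mul_le_mul_of_nonneg_left (by
                    calc tabooP p A (k+1) (r:S) b * tabooP p B (n-1-k) b j
                        ≤ 1 * 1 := mul_le_mul (hT1 _ _ _ _) (hT1 _ _ _ _) (hTn _ _ _) zero_le_one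
                      _ = 1 := mul_one 1) (hp0 _ _)
                _ = p i (r : S) := mul_one _
          _ = (n-1 : ℕ) * p i (r : S) := by rw [Finset.sum_const, Finset.card_range, nsmul_eq_mul]),
        Summable.tsum_finsetSum hsum2]
      congr 1
      · exact (tabooP_succ A hn i j).symm
      · refine Finset.sum_congr rfl fun k _ => ?_
        have : (fun r : ↥Aᶜ => p i (r : S) * (tabooP p A (k+1) (r : S) b * tabooP p B (n-1-k) b j))
            = fun r : ↥Aᶜ => (p i (r : S) * tabooP p A (k+1) (r : S) b) * tabooP p B (n-1-k) b j := by
          funext r; ring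
        rw [this, tsum_mul_right, ← tabooP_succ A (Nat.le_add_left 1 k) i b]
    -- reassemble
    have hfin : p i b * tabooP p B n b j +
        ∑ k ∈ Finset.range (n-1), tabooP p A (k+2) i b * tabooP p B (n-1-k) b j
        = ∑ k ∈ Finset.range n, tabooP p A (k+1) i b * tabooP p B (n-k) b j := by
      obtain ⟨m, rfl⟩ : ∃ m, n = m + 1 := ⟨n - 1, (Nat.succ_pred_eq_of_pos hn).symm⟩
      rw [Finset.sum_range_succ' (fun k => tabooP p A (k+1) i b * tabooP p B (m+1-k) b j) m,
        add_comm]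
      have h1 : tabooP p A 1 i b = p i b := rfl
      have h2 : ∀ k : ℕ, m + 1 - (k+1) = m - k := fun k => by omega
      have h3 : ∀ k : ℕ, m + 1 - 1 - k = m - k := fun k => by omega
      simp only [h1, h2, h3, Nat.sub_zero, Nat.add_sub_cancel]
    calc tabooP p B (n+1) i j
        = p i b * tabooP p B n b j + ∑' r : ↥Aᶜ, p i (r : S) * tabooP p B n (r : S) j := hstep
      _ ≤ p i b * tabooP p B n b j + ∑' r : ↥Aᶜ, p i (r : S) * G (r : S) :=
          add_le_add_right hbound _
      _ = tabooP p A (n+1) i j + (p i b * tabooP p B n b j +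
            ∑ k ∈ Finset.range (n-1), tabooP p A (k+2) i b * tabooP p B (n-1-k) b j) := by
          rw [hcomp]; ring
      _ = tabooP p A (n+1) i j +
            ∑ k ∈ Finset.range n, tabooP p A (k+1) i b * tabooP p B (n-k) b j := by rw [hfin]
      _ = tabooP p A (n+1) i j +
            ∑ k ∈ Finset.range ((n+1)-1), tabooP p A (k+1) i b * tabooP p B ((n+1)-1-k) b j := by
          norm_num

end decomp

section path

variable {S : Type*} {p : S → S → ℝ}
  (hp0 : ∀ i j, 0 ≤ p i j)

include hp0 in
lemma exists_pos_path :
    ∀ n, 1 ≤ n → ∀ i j : S, 0 < tabooP p (∅ : Set S) n i j →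
      ∃ f : ℕ → S, f 0 = i ∧ f n = j ∧ ∀ t < n, 0 < p (f t) (f (t+1)) := by
  intro n hn
  induction n, hn using Nat.le_induction with
  | base =>
    intro i j hij
    refine ⟨fun t => if t = 0 then i else j, by simp, by simp, ?_⟩
    intro t ht
    interval_cases t
    simpa [tabooP] using hij
  | succ n hn IH =>
    intro i j hij
    rw [tabooP_succ (∅ : Set S) hn i j] at hij
    have hex : ∃ r : ↥(∅ : Set S)ᶜ, 0 < p i (r : S) * tabooP p ∅ n (r : S) j := by
      by_contra hcon
      push_neg at hcon
      have hz : ∀ r : ↥(∅ : Set S)ᶜ, p i (r : S) * tabooP p ∅ n (r : S) j = 0 := fun r =>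
        le_antisymm (hcon r) (mul_nonneg (hp0 _ _) (tabooP_nonneg hp0 _ _ _ _))
      rw [tsum_congr hz] at hij
      simp at hij
    obtain ⟨r, hr⟩ := hex
    have h0a : 0 ≤ p i (r : S) := hp0 _ _
    have h0b : 0 ≤ tabooP p ∅ n (r : S) j := tabooP_nonneg hp0 _ _ _ _
    obtain ⟨h1, h2⟩ | ⟨h1, h2⟩ := mul_pos_iff.mp hr
    · obtain ⟨g, hg0, hgn, hgs⟩ := IH (r : S) j h2
      refine ⟨fun t => if t = 0 then i else g (t-1), by simp, by simp [hgn], ?_⟩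
      intro t ht
      match t with
      | 0 => simpa [hg0] using h1
      | (s+1) =>
        have hs : s < n := by omega
        simpa using hgs s hs
    · linarith

include hp0 in
lemma exists_good_path (hirr : ∀ i j, ∃ n, 1 ≤ n ∧ 0 < nstep p n i j)
    (B : Set S) (hBne : B.Nonempty) (b : S) (hb : b ∉ B) :
    ∃ m, 1 ≤ m ∧ ∃ f : ℕ → S, f 0 = b ∧ f m ∈ B ∧ (∀ t < m, 0 < p (f t) (f (t+1))) ∧
      ∀ t, 0 < t → t < m → f t ∉ B ∧ f t ≠ b := by
  classical
  set P : ℕ → Prop := fun m => 1 ≤ m ∧ ∃ f : ℕ → S, f 0 = b ∧ f m ∈ B ∧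
    ∀ t < m, 0 < p (f t) (f (t+1)) with hP
  have hPex : ∃ m, P m := by
    obtain ⟨j₀, hj₀⟩ := hBne
    obtain ⟨n, hn1, hnpos⟩ := hirr b j₀
    obtain ⟨f, hf0, hfn, hfs⟩ := exists_pos_path hp0 n hn1 b j₀ hnpos
    exact ⟨n, hn1, f, hf0, hfn ▸ hj₀, hfs⟩
  set m := Nat.find hPex with hm
  obtain ⟨hm1, f, hf0, hfm, hfs⟩ := Nat.find_spec hPex
  refine ⟨m, hm1, f, hf0, hfm, hfs, ?_⟩
  intro t ht0 htm
  constructor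
  · intro htB
    have : P t := ⟨ht0, f, hf0, htB, fun s hs => hfs s (by omega)⟩
    exact absurd (Nat.find_le this) (by omega)
  · intro htb
    have : P (m - t) := by
      refine ⟨by omega, fun s => f (t + s), by simpa [htb], by
        have : t + (m - t) = m := by omega
        simpa [this], fun s hs => ?_⟩
      have := hfs (t + s) (by omega)
      simpa [Nat.add_assoc] using this
    exact absurd (Nat.find_le this) (by omega)

end path

section hitting

variable {S : Type*} {p : S → S → ℝ}
  (hp0 : ∀ i j, 0 ≤ p i j) (hp1 : ∀ i, HasSum (fun j => p i j) 1)

include hp0 hp1 in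
lemma hitting_bound (hirr : ∀ i j, ∃ n, 1 ≤ n ∧ 0 < nstep p n i j)
    (B : Set S) (hBne : B.Nonempty) (b : S) (hb : b ∉ B) :
    ∃ δ : ℝ, 0 < δ ∧ ∀ N : ℕ,
      (∑ n ∈ Finset.range N, tabooP p (B ∪ {b}) (n+1) b b) ≤ 1 - δ := by
  classical
  set A : Set S := B ∪ {b} with hA
  have hbA : b ∈ A := by simp [hA]
  obtain ⟨m, hm1, f, hf0, hfm, hfs, hint⟩ := exists_good_path hp0 hirr B hBne b hb
  have hple1 : ∀ i j, p i j ≤ 1 := p_le_one hp0 hp1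
  set π : ℕ → ℝ := fun t => ∏ s ∈ Finset.Ico t m, p (f s) (f (s+1)) with hπ
  have hπpos : ∀ t, 0 < π t := fun t =>
    Finset.prod_pos fun s hs => hfs s (Finset.mem_Ico.mp hs).2
  have hπle1 : ∀ t, π t ≤ 1 := fun t =>
    Finset.prod_le_one (fun s _ => hp0 _ _) (fun s _ => hple1 _ _)
  have hπstep : ∀ t, t < m → π t = p (f t) (f (t+1)) * π (t+1) := fun t ht =>
    Finset.prod_eq_prod_Ico_succ_bot ht _
  set v : ℕ → S → ℝ := fun N i => ∑ n ∈ Finset.range N, tabooP p A (n+1) i b with hv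
  have hv0 : ∀ N i, 0 ≤ v N i := fun N i =>
    Finset.sum_nonneg fun n _ => tabooP_nonneg hp0 _ _ _ _
  have hvbd : ∀ N i, v N i ≤ N := by
    intro N i
    calc v N i ≤ ∑ n ∈ Finset.range N, 1 :=
          Finset.sum_le_sum fun n _ => tabooP_le_one hp0 hp1 A (n+1) i b
      _ = N := by simp
  have hsumv : ∀ (N : ℕ) (i : S) (T : Set S), Summable (fun r : ↥T => p i (r : S) * v N (r : S)) :=
    fun N i T => summable_mul_bdd hp0 hp1 i T (v N) N (hv0 N) (hvbd N)
  have hvrec : ∀ N i, v (N+1) i = p i b + ∑' r : ↥Aᶜ, p i (r : S) * v N (r : S) := by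
    intro N i
    have e1 : v (N+1) i = (∑ n ∈ Finset.range N, tabooP p A (n+2) i b) + tabooP p A 1 i b :=
      Finset.sum_range_succ' (fun n => tabooP p A (n+1) i b) N
    have e2 : ∀ n, tabooP p A (n+2) i b = ∑' r : ↥Aᶜ, p i (r : S) * tabooP p A (n+1) (r : S) b :=
      fun n => tabooP_succ A (Nat.le_add_left 1 n) i b
    have e3 : (∑ n ∈ Finset.range N, tabooP p A (n+2) i b)
        = ∑' r : ↥Aᶜ, p i (r : S) * v N (r : S) := by
      rw [Finset.sum_congr rfl fun n _ => e2 n,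
        ← Summable.tsum_finsetSum (fun n _ => summable_mul_bdd hp0 hp1 i Aᶜ (fun x => tabooP p A (n+1) x b) 1
          (fun r => tabooP_nonneg hp0 _ _ _ _) (fun r => tabooP_le_one hp0 hp1 _ _ _ _))]
      exact tsum_congr fun r => (Finset.mul_sum _ _ _).symm
    have e4 : tabooP p A 1 i b = p i b := rfl
    rw [e1, e3, e4, add_comm]
  -- tsum of p-row over {b} ∪ Aᶜ is at most 1
  have hdisjbA : Disjoint ({b} : Set S) Aᶜ := by
    rw [Set.disjoint_left]; rintro x rfl; simp [hA]
  have hrowsub : ∀ (i : S) (T : Set S), Summable ((p i) ∘ (Subtype.val : ↥T → S)) :=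
    fun i T => (hp1 i).summable.subtype T
  have hunion1 : ∀ i : S, p i b + (∑' r : ↥Aᶜ, p i (r : S)) = ∑' r : ↥({b} ∪ Aᶜ), p i (r : S) := by
    intro i
    rw [Summable.tsum_union_disjoint (f := p i) hdisjbA (hrowsub i _) (hrowsub i _), tsum_singleton b (p i)]
  have hle1 : ∀ (i : S) (T : Set S), (∑' r : ↥T, p i (r : S)) ≤ 1 := by
    intro i T
    calc (∑' r : ↥T, p i (r : S)) ≤ ∑' r : ↥(Set.univ : Set S), p i (r : S) :=
          tsum_set_mono (hp1 i).summable (hp0 i) (Set.subset_univ T)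
      _ = 1 := by rw [tsum_univ]; exact (hp1 i).tsum_eq
  have hkey : ∀ N, (∀ i, v N i ≤ 1) ∧ ∀ t, t < m → v N (f t) ≤ 1 - π t := by
    intro N
    induction N with
    | zero =>
      constructor
      · intro i; simpa [hv] using zero_le_one
      · intro t ht
        have := hπle1 t
        simp only [hv, Finset.range_zero, Finset.sum_empty]
        linarith
    | succ N IH =>
      obtain ⟨IH1, IH2⟩ := IH
      have hgen : ∀ i, v (N+1) i ≤ 1 := by
        intro i
        rw [hvrec N i]
        have h1 : (∑' r : ↥Aᶜ, p i (r : S) * v N (r : S)) ≤ ∑' r : ↥Aᶜ, p i (r : S) := by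
          refine Summable.tsum_le_tsum (fun r => ?_) (hsumv N i Aᶜ) (hrowsub i Aᶜ)
          calc p i (r : S) * v N (r : S) ≤ p i (r : S) * 1 :=
                mul_le_mul_of_nonneg_left (IH1 _) (hp0 _ _)
            _ = p i (r : S) := mul_one _
        calc p i b + (∑' r : ↥Aᶜ, p i (r : S) * v N (r : S))
            ≤ p i b + (∑' r : ↥Aᶜ, p i (r : S)) := by linarith
          _ = ∑' r : ↥({b} ∪ Aᶜ), p i (r : S) := hunion1 i
          _ ≤ 1 := hle1 i _
      refine ⟨hgen, ?_⟩
      intro t ht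
      rw [hvrec N (f t)]
      by_cases hc : t + 1 = m
      · -- last step: f (t+1) = f m ∈ B
        have hfmb : f m ≠ b := fun h => hb (h ▸ hfm)
        have hsub : ({b} : Set S) ∪ Aᶜ ⊆ ({f m} : Set S)ᶜ := by
          rintro x (rfl | hx)
          · simpa using fun h => hfmb h.symm
          · intro hxm
            simp only [Set.mem_singleton_iff] at hxm
            subst hxm
            exact hx (Or.inl hfm)
        have h1 : (∑' r : ↥Aᶜ, p (f t) (r : S) * v N (r : S)) ≤ ∑' r : ↥Aᶜ, p (f t) (r : S) := by
          refine Summable.tsum_le_tsum (fun r => ?_) (hsumv N _ Aᶜ) (hrowsub _ Aᶜ)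
          calc p (f t) (r : S) * v N (r : S) ≤ p (f t) (r : S) * 1 :=
                mul_le_mul_of_nonneg_left (IH1 _) (hp0 _ _)
            _ = p (f t) (r : S) := mul_one _
        have h2 : (∑' r : ↥(({f m} : Set S)ᶜ), p (f t) (r : S)) = 1 - p (f t) (f m) := by
          have := Summable.tsum_add_tsum_compl (s := ({f m} : Set S)) (f := p (f t))
            (hrowsub _ _) (hrowsub _ _)
          rw [tsum_singleton (f m) (p (f t)), (hp1 (f t)).tsum_eq] at this
          linarith
        have hπm : π m = 1 := by simp [hπ]
        have hπt : π t = p (f t) (f m) := by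
          rw [hπstep t ht, hc, hπm, mul_one]
        calc p (f t) b + (∑' r : ↥Aᶜ, p (f t) (r : S) * v N (r : S))
            ≤ p (f t) b + (∑' r : ↥Aᶜ, p (f t) (r : S)) := by linarith
          _ = ∑' r : ↥({b} ∪ Aᶜ), p (f t) (r : S) := hunion1 (f t)
          _ ≤ ∑' r : ↥(({f m} : Set S)ᶜ), p (f t) (r : S) :=
              tsum_set_mono (hp1 _).summable (hp0 _) hsub
          _ = 1 - p (f t) (f m) := h2
          _ = 1 - π t := by rw [hπt]
      · -- intermediate step: c := f (t+1) ∈ Aᶜ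
        set c := f (t+1) with hcdef
        have hcA : c ∈ Aᶜ := by
          have := hint (t+1) (by omega) (by omega)
          simp only [hA, Set.mem_compl_iff, Set.mem_union, Set.mem_singleton_iff]
          tauto
        have hsplitc : (Aᶜ : Set S) = {c} ∪ (Aᶜ \ {c}) := by
          rw [Set.union_diff_cancel (by simpa using hcA)]
        have hdisjc : Disjoint ({c} : Set S) (Aᶜ \ {c}) := by
          rw [Set.disjoint_left]; rintro x rfl; simp
        have hsplit2 : (∑' r : ↥Aᶜ, p (f t) (r : S) * v N (r : S))
            = p (f t) c * v N c + ∑' r : ↥(Aᶜ \ {c}), p (f t) (r : S) * v N (r : S) := by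
          rw [tsum_set_congr (f := fun r => p (f t) r * v N r) hsplitc,
            Summable.tsum_union_disjoint (f := fun r => p (f t) r * v N r) hdisjc
              (hsumv N _ _) (hsumv N _ _),
            tsum_singleton c (fun r => p (f t) r * v N r)]
        have h1 : (∑' r : ↥(Aᶜ \ {c}), p (f t) (r : S) * v N (r : S))
            ≤ ∑' r : ↥(Aᶜ \ {c}), p (f t) (r : S) := by
          refine Summable.tsum_le_tsum (fun r => ?_) (hsumv N _ _) (hrowsub _ _)
          calc p (f t) (r : S) * v N (r : S) ≤ p (f t) (r : S) * 1 :=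
                mul_le_mul_of_nonneg_left (IH1 _) (hp0 _ _)
            _ = p (f t) (r : S) := mul_one _
        have h2 : v N c ≤ 1 - π (t+1) := IH2 (t+1) (by omega)
        have hq0 : 0 ≤ p (f t) c := hp0 _ _
        have hbr : p (f t) b + (p (f t) c + ∑' r : ↥(Aᶜ \ {c}), p (f t) (r : S)) ≤ 1 := by
          have e5 : p (f t) c + (∑' r : ↥(Aᶜ \ {c}), p (f t) (r : S))
              = ∑' r : ↥Aᶜ, p (f t) (r : S) := by
            rw [tsum_set_congr (f := p (f t)) hsplitc,
              Summable.tsum_union_disjoint (f := p (f t)) hdisjc (hrowsub _ _) (hrowsub _ _),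
              tsum_singleton c (p (f t))]
          rw [e5]
          calc p (f t) b + (∑' r : ↥Aᶜ, p (f t) (r : S))
              = ∑' r : ↥({b} ∪ Aᶜ), p (f t) (r : S) := hunion1 (f t)
            _ ≤ 1 := hle1 _ _
        have hπt : π t = p (f t) c * π (t+1) := hπstep t ht
        have hπ1 : 0 < π (t+1) := hπpos (t+1)
        have hmul : p (f t) c * v N c ≤ p (f t) c * (1 - π (t+1)) :=
          mul_le_mul_of_nonneg_left h2 hq0
        rw [hsplit2]
        nlinarith [hπpos t]
  refine ⟨π 0, hπpos 0, fun N => ?_⟩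
  have := (hkey N).2 0 (by omega)
  rw [hf0] at this
  simpa [hv] using this

end hitting

set_option maxHeartbeats 2000000 in
/-- The inductive step in the proof of Proposition 4.4: removing one state from the taboo
set preserves exponential decay of taboo probabilities. -/
theorem stmt_5 {S : Type*} [Countable S] (p : S → S → ℝ)
    (hp_nonneg : ∀ i j, 0 ≤ p i j)
    (hp_row : ∀ i, HasSum (fun j => p i j) 1)
    (hirr : ∀ i j, ∃ n, 1 ≤ n ∧ 0 < nstep p n i j)
    (B : Set S) (hBne : B.Nonempty) (b : S) (hb : b ∉ B)
    (τ : ℝ) (hτ0 : 0 < τ) (hτ1 : τ < 1)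
    (C : S → S → ℝ) (hC : ∀ i j, 0 < C i j)
    (hdecay : ∀ i j : S, ∀ n : ℕ, 1 ≤ n →
      tabooP p (B ∪ {b}) n i j ≤ C i j * τ ^ n) :
    ∃ τhat : ℝ, 0 < τhat ∧ τhat < 1 ∧ ∃ Chat : S → S → ℝ, (∀ i j, 0 < Chat i j) ∧
      ∀ i j : S, ∀ n : ℕ, 1 ≤ n → tabooP p B n i j ≤ Chat i j * τhat ^ n := by
  classical
  set A : Set S := B ∪ {b} with hA
  obtain ⟨δ, hδ0, hS⟩ := hitting_bound hp_nonneg hp_row hirr B hBne b hb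
  set Cb : ℝ := C b b with hCb
  have hCb0 : 0 < Cb := hC b b
  have hy : (0:ℝ) < 1 - τ := by linarith
  set η : ℝ := min ((1-τ)/2) (δ*(1-τ)^2/(4*τ*Cb + 1)) with hη
  have hden : (0:ℝ) < 4*τ*Cb + 1 := by positivity
  have hη0 : 0 < η := lt_min (by linarith) (by positivity)
  have hη1 : η ≤ (1-τ)/2 := min_le_left _ _
  have hη2 : η ≤ δ*(1-τ)^2/(4*τ*Cb + 1) := min_le_right _ _
  set τh : ℝ := 1 - η with hτh
  have hττh : τ < τh := by simp only [hτh]; linarith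
  have hτh1 : τh < 1 := by simp only [hτh]; linarith
  have hτh0 : 0 < τh := lt_trans hτ0 hττh
  set θ : ℝ := τ / τh with hθ
  have hθ0 : 0 < θ := div_pos hτ0 hτh0
  have hθ1 : θ < 1 := (div_lt_one hτh0).mpr hττh
  -- the return-probability sequence and its weighted sum
  set q : ℕ → ℝ := fun n => tabooP p A (n+1) b b with hq
  have hq0 : ∀ n, 0 ≤ q n := fun n => tabooP_nonneg hp_nonneg A _ _ _
  have hqsum : Summable q := summable_of_sum_range_le hq0 hS
  have hqdecay : ∀ n, q n ≤ Cb * τ^(n+1) := fun n => hdecay b b (n+1) (Nat.le_add_left 1 n)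
  set g : ℕ → ℝ := fun n => q n / τh^(n+1) with hg
  have hg0 : ∀ n, 0 ≤ g n := fun n => div_nonneg (hq0 n) (by positivity)
  have hgle : ∀ n, g n ≤ Cb * θ^(n+1) := by
    intro n
    have h1 : q n / τh^(n+1) ≤ (Cb * τ^(n+1)) / τh^(n+1) :=
      div_le_div_of_nonneg_right (hqdecay n) (by positivity)
    calc g n ≤ (Cb * τ^(n+1)) / τh^(n+1) := h1
      _ = Cb * θ^(n+1) := by
          rw [hθ, div_pow, mul_div_assoc]
  have hsumgeoθ : Summable (fun n : ℕ => Cb * θ^(n+1)) := by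
    have : Summable (fun n : ℕ => (Cb * θ) * θ^n) :=
      (summable_geometric_of_lt_one hθ0.le hθ1).mul_left _
    refine this.congr fun n => by ring
  have hgsum : Summable g := Summable.of_nonneg_of_le hg0 hgle hsumgeoθ
  set ρ : ℝ := ∑' n, g n with hρ
  have hρ0 : 0 ≤ ρ := tsum_nonneg hg0
  have htsumθ : ∑' n : ℕ, θ^(n+1) = θ * (1-θ)⁻¹ := by
    rw [show (fun n : ℕ => θ^(n+1)) = fun n : ℕ => θ * θ^n from funext fun n => by ring,
      tsum_mul_left, tsum_geometric_of_lt_one hθ0.le hθ1]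
  have htsumτ : ∑' n : ℕ, τ^(n+1) = τ * (1-τ)⁻¹ := by
    rw [show (fun n : ℕ => τ^(n+1)) = fun n : ℕ => τ * τ^n from funext fun n => by ring,
      tsum_mul_left, tsum_geometric_of_lt_one hτ0.le hτ1]
  have hsumθ1 : Summable (fun n : ℕ => θ^(n+1)) := by
    have := (summable_geometric_of_lt_one hθ0.le hθ1).mul_left θ
    exact this.congr fun n => by ring
  have hsumτ1 : Summable (fun n : ℕ => τ^(n+1)) := by
    have := (summable_geometric_of_lt_one hτ0.le hτ1).mul_left τ
    exact this.congr fun n => by ring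
  -- ρ ≤ 1 - δ/2
  have hρbound : ρ ≤ 1 - δ/2 := by
    have hsplit : ∀ n, g n = q n + (g n - q n) := fun n => by ring
    have hsumdiff : Summable (fun n => g n - q n) := hgsum.sub hqsum
    have e1 : ρ = (∑' n, q n) + ∑' n, (g n - q n) := by
      rw [hρ, tsum_congr hsplit, Summable.tsum_add hqsum hsumdiff]
    have e2 : (∑' n, q n) ≤ 1 - δ := Summable.tsum_le_of_sum_range_le hqsum hS
    have hdle : ∀ n, g n - q n ≤ Cb * (θ^(n+1) - τ^(n+1)) := by
      intro n
      have hτhn : 0 < τh^(n+1) := by positivity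
      have h1τh : (1:ℝ) ≤ 1 / τh^(n+1) := by
        rw [le_div_iff₀ hτhn, one_mul]
        exact pow_le_one₀ hτh0.le hτh1.le
      have e3 : g n - q n = q n * (1/τh^(n+1) - 1) := by
        simp only [hg]
        field_simp
      rw [e3]
      have e4 : Cb * (θ^(n+1) - τ^(n+1)) = (Cb * τ^(n+1)) * (1/τh^(n+1) - 1) := by
        rw [hθ, div_pow]
        field_simp
      rw [e4]
      exact mul_le_mul_of_nonneg_right (hqdecay n) (by linarith)
    have hsumrhs : Summable (fun n => Cb * (θ^(n+1) - τ^(n+1))) :=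
      ((hsumθ1.sub hsumτ1).mul_left Cb)
    have e5 : (∑' n, (g n - q n)) ≤ ∑' n, Cb * (θ^(n+1) - τ^(n+1)) :=
      Summable.tsum_le_tsum hdle hsumdiff hsumrhs
    have e6 : (∑' n, Cb * (θ^(n+1) - τ^(n+1))) = Cb * (θ*(1-θ)⁻¹ - τ*(1-τ)⁻¹) := by
      rw [tsum_mul_left, Summable.tsum_sub hsumθ1 hsumτ1, htsumθ, htsumτ]
    -- arithmetic: Cb * (θ/(1-θ) - τ/(1-τ)) ≤ δ/2
    have harith : Cb * (θ*(1-θ)⁻¹ - τ*(1-τ)⁻¹) ≤ δ/2 := by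
      have hx : 0 < τh - τ := by linarith
      have e7 : θ*(1-θ)⁻¹ = τ / (τh - τ) := by
        rw [hθ]
        rw [show 1 - τ/τh = (τh - τ)/τh by field_simp]
        field_simp
      rw [e7]
      have e8 : τ / (τh - τ) - τ * (1-τ)⁻¹ = τ * η / ((τh - τ) * (1-τ)) := by
        rw [show τ * (1-τ)⁻¹ = τ/(1-τ) from (div_eq_mul_inv τ _).symm,
          div_sub_div _ _ hx.ne' hy.ne']
        congr 1
        rw [hτh]; ring
      rw [e8]
      have hxy : 0 < (τh - τ) * (1-τ) := mul_pos hx hy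
      rw [show Cb * (τ * η / ((τh - τ) * (1-τ))) = Cb * τ * η / ((τh - τ) * (1-τ)) by ring,
        div_le_div_iff₀ hxy two_pos]
      have h9 : η * (4*τ*Cb + 1) ≤ δ*(1-τ)^2 := (le_div_iff₀ hden).mp hη2
      have h10 : (1-τ)/2 ≤ τh - τ := by rw [hτh]; linarith
      clear_value τh η
      have s1 : 4*(Cb*τ*η) ≤ δ*(1-τ)^2 := by nlinarith [h9, hη0.le]
      have s2 : δ*(1-τ)^2 ≤ 2*(δ*((τh-τ)*(1-τ))) := by
        nlinarith [mul_le_mul_of_nonneg_left h10 (mul_nonneg hδ0.le hy.le)]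
      linarith
    calc ρ = (∑' n, q n) + ∑' n, (g n - q n) := e1
      _ ≤ (1 - δ) + Cb * (θ*(1-θ)⁻¹ - τ*(1-τ)⁻¹) := by
          rw [← e6]; exact add_le_add e2 e5
      _ ≤ (1 - δ) + δ/2 := by linarith
      _ = 1 - δ/2 := by ring
  have hρ1 : ρ < 1 := lt_of_le_of_lt hρbound (by linarith)
  have h1ρ : 0 < 1 - ρ := by linarith
  set K : S → ℝ := fun j => C b j / (1 - ρ) with hK
  have hK0 : ∀ j, 0 < K j := fun j => div_pos (hC b j) h1ρ
  have hτhpow : ∀ n : ℕ, (0:ℝ) < τh^n := fun n => pow_pos hτh0 n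
  have hτpow : ∀ n : ℕ, τ^n ≤ τh^n := fun n => pow_le_pow_left₀ hτ0.le hττh.le n
  -- Claim 1 : bound starting at b
  have hclaim1 : ∀ (j : S) (n : ℕ), 1 ≤ n → tabooP p B n b j ≤ K j * τh^n := by
    intro j n
    induction n using Nat.strong_induction_on with
    | _ n IH =>
      intro hn
      have hdec := decomp hp_nonneg hp_row B b hb n hn b j
      have hterm1 : tabooP p A n b j ≤ C b j * τh^n :=
        le_trans (hdecay b j n hn) (mul_le_mul_of_nonneg_left (hτpow n) (hC b j).le)
      have hterm2 : (∑ k ∈ Finset.range (n-1), tabooP p A (k+1) b b * tabooP p B (n-1-k) b j)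
          ≤ K j * τh^n * ρ := by
        have hstep : ∀ k ∈ Finset.range (n-1),
            tabooP p A (k+1) b b * tabooP p B (n-1-k) b j ≤ (K j * τh^n) * g k := by
          intro k hk
          have hkn : k < n - 1 := Finset.mem_range.mp hk
          have h1k : 1 ≤ n - 1 - k := by omega
          have hlt : n - 1 - k < n := by omega
          have hIH := IH (n-1-k) hlt h1k
          have hqk : tabooP p A (k+1) b b = q k := rfl
          have hpow : τh^(k+1) * τh^(n-1-k) = τh^n := by
            rw [← pow_add]
            congr 1
            omega
          calc tabooP p A (k+1) b b * tabooP p B (n-1-k) b j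
              ≤ q k * (K j * τh^(n-1-k)) := by
                rw [hqk]
                exact mul_le_mul_of_nonneg_left hIH (hq0 k)
            _ = (K j * τh^n) * g k := by
                have hgk : g k = q k / τh^(k+1) := rfl
                have hne : (τh:ℝ)^(k+1) ≠ 0 := (pow_pos hτh0 _).ne'
                rw [hgk, ← hpow]
                field_simp
        calc (∑ k ∈ Finset.range (n-1), tabooP p A (k+1) b b * tabooP p B (n-1-k) b j)
            ≤ ∑ k ∈ Finset.range (n-1), (K j * τh^n) * g k := Finset.sum_le_sum hstep
          _ = (K j * τh^n) * ∑ k ∈ Finset.range (n-1), g k := by rw [Finset.mul_sum]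
          _ ≤ (K j * τh^n) * ρ := by
              refine mul_le_mul_of_nonneg_left ?_ (mul_pos (hK0 j) (hτhpow n)).le
              exact Summable.sum_le_tsum _ (fun k _ => hg0 k) hgsum
          _ = K j * τh^n * ρ := rfl
      have hfinal : C b j * τh^n + K j * τh^n * ρ = K j * τh^n := by
        have : C b j = K j * (1 - ρ) := by
          rw [hK]; field_simp
        rw [this]; ring
      calc tabooP p B n b j
          ≤ tabooP p A n b j + ∑ k ∈ Finset.range (n-1),
              tabooP p A (k+1) b b * tabooP p B (n-1-k) b j := hdec
        _ ≤ C b j * τh^n + K j * τh^n * ρ := add_le_add hterm1 hterm2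
        _ = K j * τh^n := hfinal
  -- Claim 2 : general bound
  set Θ : ℝ := θ * (1-θ)⁻¹ with hΘ
  have hΘ0 : 0 < Θ := mul_pos hθ0 (inv_pos.mpr (by linarith))
  refine ⟨τh, hτh0, hτh1, fun i j => C i j + C i b * K j * Θ,
    fun i j => add_pos (hC i j) (mul_pos (mul_pos (hC i b) (hK0 j)) hΘ0), ?_⟩
  intro i j n hn
  have hdec := decomp hp_nonneg hp_row B b hb n hn i j
  have hterm1 : tabooP p A n i j ≤ C i j * τh^n :=
    le_trans (hdecay i j n hn) (mul_le_mul_of_nonneg_left (hτpow n) (hC i j).le)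
  have hterm2 : (∑ k ∈ Finset.range (n-1), tabooP p A (k+1) i b * tabooP p B (n-1-k) b j)
      ≤ C i b * K j * Θ * τh^n := by
    have hstep : ∀ k ∈ Finset.range (n-1),
        tabooP p A (k+1) i b * tabooP p B (n-1-k) b j
          ≤ (C i b * K j * τh^n) * θ^(k+1) := by
      intro k hk
      have hkn : k < n - 1 := Finset.mem_range.mp hk
      have h1k : 1 ≤ n - 1 - k := by omega
      have h1 : tabooP p A (k+1) i b ≤ C i b * τ^(k+1) :=
        hdecay i b (k+1) (Nat.le_add_left 1 k)
      have h2 : tabooP p B (n-1-k) b j ≤ K j * τh^(n-1-k) := hclaim1 j (n-1-k) h1k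
      have hpow : τh^(k+1) * τh^(n-1-k) = τh^n := by
        rw [← pow_add]; congr 1; omega
      have hτθ : τ^(k+1) = θ^(k+1) * τh^(k+1) := by
        rw [hθ, div_pow]
        field_simp
      calc tabooP p A (k+1) i b * tabooP p B (n-1-k) b j
          ≤ (C i b * τ^(k+1)) * (K j * τh^(n-1-k)) := by
            refine mul_le_mul h1 h2 (tabooP_nonneg hp_nonneg _ _ _ _)
              (mul_nonneg (hC i b).le (by positivity))
        _ = (C i b * K j * τh^n) * θ^(k+1) := by
            rw [hτθ, ← hpow]; ring
    calc (∑ k ∈ Finset.range (n-1), tabooP p A (k+1) i b * tabooP p B (n-1-k) b j)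
        ≤ ∑ k ∈ Finset.range (n-1), (C i b * K j * τh^n) * θ^(k+1) :=
          Finset.sum_le_sum hstep
      _ = (C i b * K j * τh^n) * ∑ k ∈ Finset.range (n-1), θ^(k+1) := by rw [Finset.mul_sum]
      _ ≤ (C i b * K j * τh^n) * Θ := by
          refine mul_le_mul_of_nonneg_left ?_
            (mul_nonneg (mul_nonneg (hC i b).le (hK0 j).le) (hτhpow n).le)
          refine le_trans (Summable.sum_le_tsum _ (fun k _ => (pow_nonneg hθ0.le _)) hsumθ1)
            (le_of_eq htsumθ)
      _ = C i b * K j * Θ * τh^n := by ring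
  calc tabooP p B n i j
      ≤ tabooP p A n i j + ∑ k ∈ Finset.range (n-1),
          tabooP p A (k+1) i b * tabooP p B (n-1-k) b j := hdec
    _ ≤ C i j * τh^n + C i b * K j * Θ * τh^n := add_le_add hterm1 hterm2
    _ = (C i j + C i b * K j * Θ) * τh^n := by ring
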